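/- Let C be a completely pseudo-regular code in a finite simple connected graph Γ. Then for every k = 0,1,…,ε_C − 1, ev_C Γ = ev_{C_k} Γ ∪ ev_{C_{k+1}} Γ; i.e., no C-local eigenvalue can be simultaneously absent from the local spectra of two consecutive subconstituents. -/

import Mathlib

open Finset Polynomial BigOperators
open scoped Classical

noncomputable section

/-- The eigenspace of a real matrix `A` (viewed as an operator on Euclidean space)
for the value `μ`. -/
def eigSp {n : ℕ} (A : Matrix (Fin n) (Fin n) ℝ) (μ : ℝ) :
    Submodule ℝ (EuclideanSpace ℝ (Fin n)) :=
  Module.End.eigenspace (Matrix.toEuclideanLin A) μ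

/-- Orthogonal projection onto the `μ`-eigenspace of `A`. -/
def eigProj {n : ℕ} (A : Matrix (Fin n) (Fin n) ℝ) (μ : ℝ) (v : EuclideanSpace ℝ (Fin n)) :
    EuclideanSpace ℝ (Fin n) :=
  ((eigSp A μ).orthogonalProjection v : EuclideanSpace ℝ (Fin n))

/-- The weighted characteristic vector `ρS = Σ_{i∈S} ν_i e_i`. -/
def rho {n : ℕ} (ν : EuclideanSpace ℝ (Fin n)) (S : Finset (Fin n)) :
    EuclideanSpace ℝ (Fin n) :=
  WithLp.toLp 2 (fun i => if i ∈ S then ν i else 0)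

/-- The unit vector `e_S = ρS / ‖ρS‖`. -/
def unitVec {n : ℕ} (ν : EuclideanSpace ℝ (Fin n)) (S : Finset (Fin n)) :
    EuclideanSpace ℝ (Fin n) :=
  (‖rho ν S‖)⁻¹ • rho ν S

/-- The `S`-local multiplicity of `μ`: `m_S(μ) = ‖E_μ e_S‖²`. -/
def mloc {n : ℕ} (A : Matrix (Fin n) (Fin n) ℝ) (ν : EuclideanSpace ℝ (Fin n))
    (S : Finset (Fin n)) (μ : ℝ) : ℝ :=
  ‖eigProj A μ (unitVec ν S)‖ ^ 2

/-- The `S`-local spectrum: the set of `μ` whose eigenspace sees `ρS`. -/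
def evloc {n : ℕ} (A : Matrix (Fin n) (Fin n) ℝ) (ν : EuclideanSpace ℝ (Fin n))
    (S : Finset (Fin n)) : Set ℝ :=
  {μ | eigProj A μ (rho ν S) ≠ 0}

/-- Distance from a vertex `i` to a set of vertices `S`. -/
def dSet {n : ℕ} (G : SimpleGraph (Fin n)) (S : Finset (Fin n)) (i : Fin n) : ℕ :=
  sInf {k | ∃ j ∈ S, G.dist i j = k}

/-- Eccentricity (covering radius) of a vertex set `S`. -/
def eccS {n : ℕ} (G : SimpleGraph (Fin n)) (S : Finset (Fin n)) : ℕ :=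
  Finset.univ.sup (dSet G S)

/-- The `k`-th subconstituent `S_k = {i : dist(i,S) = k}`. -/
def subcons {n : ℕ} (G : SimpleGraph (Fin n)) (S : Finset (Fin n)) (k : ℕ) :
    Finset (Fin n) :=
  Finset.univ.filter (fun i => dSet G S i = k)

/-- `p(A)·v` for a polynomial `p`, a matrix `A` and a Euclidean vector `v`. -/
def aevalVec {n : ℕ} (A : Matrix (Fin n) (Fin n) ℝ) (p : Polynomial ℝ)
    (v : EuclideanSpace ℝ (Fin n)) : EuclideanSpace ℝ (Fin n) :=
  WithLp.toLp 2 ((Polynomial.aeval A p).mulVec v)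

/-- Moment-like parameter `π_l = ∏_{h≠l} |μ_l − μ_h|` for an enumeration `μ`. -/
def piC {d : ℕ} (μ : Fin (d + 1) → ℝ) (l : Fin (d + 1)) : ℝ :=
  ∏ h ∈ Finset.univ.erase l, |μ l - μ h|

variable {n : ℕ}

lemma toEuclideanLin_mulVec (A : Matrix (Fin n) (Fin n) ℝ) (x : EuclideanSpace ℝ (Fin n)) :
    Matrix.toEuclideanLin A x = A.mulVec x := rfl

lemma mem_eigSp {A : Matrix (Fin n) (Fin n) ℝ} {μ : ℝ} {x : EuclideanSpace ℝ (Fin n)} :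
    x ∈ eigSp A μ ↔ A.mulVec x = μ • x := by
  rw [eigSp, Module.End.mem_eigenspace_iff, ← toEuclideanLin_mulVec, ← WithLp.ofLp_smul (p := 2)]
  exact (WithLp.ofLp_injective (p := 2)).eq_iff.symm

lemma aevalVec_X (A : Matrix (Fin n) (Fin n) ℝ) (v : EuclideanSpace ℝ (Fin n)) :
    aevalVec A X v = WithLp.toLp 2 (A.mulVec v) := by
  simp [aevalVec]

lemma inner_X_symm {A : Matrix (Fin n) (Fin n) ℝ} (hA : A.transpose = A)
    (u v : EuclideanSpace ℝ (Fin n)) :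
    (inner ℝ (aevalVec A X u) v : ℝ) = inner ℝ u (aevalVec A X v) := by
  have hAij : ∀ i j, A i j = A j i := fun i j => by
    conv_lhs => rw [← hA, Matrix.transpose_apply]
  simp only [PiLp.inner_apply, RCLike.inner_apply, conj_trivial, aevalVec, aeval_X, WithLp.ofLp_toLp]
  simp only [Matrix.mulVec, dotProduct]
  simp only [Finset.sum_mul, Finset.mul_sum]
  rw [Finset.sum_comm]
  apply Finset.sum_congr rfl
  intro i _
  apply Finset.sum_congr rfl
  intro j _
  rw [hAij j i]; ring

lemma aevalVec_one (A : Matrix (Fin n) (Fin n) ℝ) (v : EuclideanSpace ℝ (Fin n)) :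
    aevalVec A 1 v = v := by
  simp [aevalVec]

lemma aevalVec_zero (A : Matrix (Fin n) (Fin n) ℝ) (v : EuclideanSpace ℝ (Fin n)) :
    aevalVec A 0 v = 0 := by
  simp [aevalVec]

lemma aevalVec_mul (A : Matrix (Fin n) (Fin n) ℝ) (q r : Polynomial ℝ)
    (v : EuclideanSpace ℝ (Fin n)) :
    aevalVec A (q * r) v = aevalVec A q (aevalVec A r v) := by
  simp only [aevalVec, map_mul]
  simp [Matrix.mulVec_mulVec]

lemma aevalVec_add (A : Matrix (Fin n) (Fin n) ℝ) (q r : Polynomial ℝ)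
    (v : EuclideanSpace ℝ (Fin n)) :
    aevalVec A (q + r) v = aevalVec A q v + aevalVec A r v := by
  simp only [aevalVec, map_add]
  simp [Matrix.add_mulVec]

lemma aevalVec_smul (A : Matrix (Fin n) (Fin n) ℝ) (a : ℝ) (q : Polynomial ℝ)
    (v : EuclideanSpace ℝ (Fin n)) :
    aevalVec A (a • q) v = a • aevalVec A q v := by
  simp only [aevalVec, map_smul]
  simp [Matrix.smul_mulVec]

lemma aevalVec_sum {ι : Type*} (A : Matrix (Fin n) (Fin n) ℝ) (s : Finset ι)
    (f : ι → Polynomial ℝ) (v : EuclideanSpace ℝ (Fin n)) :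
    aevalVec A (∑ j ∈ s, f j) v = ∑ j ∈ s, aevalVec A (f j) v := by
  induction s using Finset.induction_on with
  | empty => simp [aevalVec_zero]
  | insert _ _ h ih => rw [Finset.sum_insert h, Finset.sum_insert h, aevalVec_add, ih]

lemma aevalVec_vadd (A : Matrix (Fin n) (Fin n) ℝ) (q : Polynomial ℝ)
    (u v : EuclideanSpace ℝ (Fin n)) :
    aevalVec A q (u + v) = aevalVec A q u + aevalVec A q v := by
  simp only [aevalVec]
  simp [Matrix.mulVec_add]

lemma aevalVec_vsub (A : Matrix (Fin n) (Fin n) ℝ) (q : Polynomial ℝ)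
    (u v : EuclideanSpace ℝ (Fin n)) :
    aevalVec A q (u - v) = aevalVec A q u - aevalVec A q v := by
  simp only [aevalVec]
  simp [Matrix.mulVec_sub]

lemma aevalVec_vsmul (A : Matrix (Fin n) (Fin n) ℝ) (q : Polynomial ℝ) (a : ℝ)
    (v : EuclideanSpace ℝ (Fin n)) :
    aevalVec A q (a • v) = a • aevalVec A q v := by
  simp only [aevalVec]
  simp [Matrix.mulVec_smul]

lemma aevalVec_vsum {ι : Type*} (A : Matrix (Fin n) (Fin n) ℝ) (q : Polynomial ℝ)
    (s : Finset ι) (f : ι → EuclideanSpace ℝ (Fin n)) :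
    aevalVec A q (∑ j ∈ s, f j) = ∑ j ∈ s, aevalVec A q (f j) := by
  induction s using Finset.induction_on with
  | empty =>
      simp only [Finset.sum_empty]
      simpa using aevalVec_vsmul A q 0 0
  | insert _ _ h ih => rw [Finset.sum_insert h, Finset.sum_insert h, aevalVec_vadd, ih]

lemma inner_pow_symm {A : Matrix (Fin n) (Fin n) ℝ} (hA : A.transpose = A)
    (i : ℕ) (u v : EuclideanSpace ℝ (Fin n)) :
    (inner ℝ (aevalVec A (X ^ i) u) v : ℝ) = inner ℝ u (aevalVec A (X ^ i) v) := by
  induction i generalizing u v with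
  | zero => simp [aevalVec_one]
  | succ i ih =>
      rw [pow_succ, aevalVec_mul, ih, inner_X_symm hA, ← aevalVec_mul, mul_comm]

lemma inner_aevalVec_symm {A : Matrix (Fin n) (Fin n) ℝ} (hA : A.transpose = A)
    (q : Polynomial ℝ) (u v : EuclideanSpace ℝ (Fin n)) :
    (inner ℝ (aevalVec A q u) v : ℝ) = inner ℝ u (aevalVec A q v) := by
  induction q using Polynomial.induction_on' with
  | add r s hr hs =>
      rw [aevalVec_add, aevalVec_add, inner_add_left, inner_add_right, hr, hs]
  | monomial i a =>
      have hm : (monomial i a : Polynomial ℝ) = a • X ^ i := by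
        rw [Polynomial.smul_X_eq_monomial]
      rw [hm, aevalVec_smul, aevalVec_smul, real_inner_smul_left, real_inner_smul_right,
        inner_pow_symm hA]

lemma pow_mulVec_of_mem {A : Matrix (Fin n) (Fin n) ℝ} {μ : ℝ} {x : EuclideanSpace ℝ (Fin n)}
    (hx : A.mulVec x = μ • x) (i : ℕ) :
    aevalVec A (X ^ i) x = μ ^ i • x := by
  induction i with
  | zero => simp [aevalVec_one]
  | succ i ih =>
      rw [pow_succ', aevalVec_mul, ih, aevalVec_vsmul, aevalVec_X, hx, WithLp.toLp_smul, WithLp.toLp_ofLp, smul_smul, pow_succ',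
        mul_comm]

lemma aevalVec_of_mem_eigSp {A : Matrix (Fin n) (Fin n) ℝ} {μ : ℝ}
    {x : EuclideanSpace ℝ (Fin n)} (hx : x ∈ eigSp A μ) (q : Polynomial ℝ) :
    aevalVec A q x = q.eval μ • x := by
  rw [mem_eigSp] at hx
  induction q using Polynomial.induction_on' with
  | add r s hr hs => rw [aevalVec_add, hr, hs, eval_add, add_smul]
  | monomial i a =>
      have hm : (monomial i a : Polynomial ℝ) = a • X ^ i := by
        rw [Polynomial.smul_X_eq_monomial]
      rw [hm, aevalVec_smul, pow_mulVec_of_mem hx, eval_smul, eval_pow, eval_X,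
        smul_smul, smul_eq_mul]

lemma eigProj_smul (A : Matrix (Fin n) (Fin n) ℝ) (μ a : ℝ) (v : EuclideanSpace ℝ (Fin n)) :
    eigProj A μ (a • v) = a • eigProj A μ v := by
  simp [eigProj]

lemma eigProj_sub (A : Matrix (Fin n) (Fin n) ℝ) (μ : ℝ) (u v : EuclideanSpace ℝ (Fin n)) :
    eigProj A μ (u - v) = eigProj A μ u - eigProj A μ v := by
  simp [eigProj]

lemma eigProj_sum {ι : Type*} (A : Matrix (Fin n) (Fin n) ℝ) (μ : ℝ) (s : Finset ι)
    (f : ι → EuclideanSpace ℝ (Fin n)) :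
    eigProj A μ (∑ j ∈ s, f j) = ∑ j ∈ s, eigProj A μ (f j) := by
  simp [eigProj, map_sum]

lemma eigProj_aevalVec {A : Matrix (Fin n) (Fin n) ℝ} (hA : A.transpose = A) (μ : ℝ)
    (q : Polynomial ℝ) (v : EuclideanSpace ℝ (Fin n)) :
    eigProj A μ (aevalVec A q v) = q.eval μ • eigProj A μ v := by
  unfold eigProj
  apply Submodule.eq_starProjection_of_mem_of_inner_eq_zero
  · exact Submodule.smul_mem _ _ ((eigSp A μ).orthogonalProjection v).2
  · intro w hw
    have h1 : aevalVec A q v - q.eval μ • ((eigSp A μ).orthogonalProjection v :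
        EuclideanSpace ℝ (Fin n))
        = aevalVec A q (v - ((eigSp A μ).orthogonalProjection v : EuclideanSpace ℝ (Fin n))) := by
      rw [aevalVec_vsub, aevalVec_of_mem_eigSp ((eigSp A μ).orthogonalProjection v).2]
    rw [h1, inner_aevalVec_symm hA, aevalVec_of_mem_eigSp hw, real_inner_smul_right]
    have h2 : v - ((eigSp A μ).orthogonalProjection v : EuclideanSpace ℝ (Fin n)) ∈ (eigSp A μ)ᗮ :=
      Submodule.sub_starProjection_mem_orthogonal (K := eigSp A μ) v
    rw [Submodule.mem_orthogonal'] at h2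
    rw [h2 w hw, mul_zero]

lemma eigProj_of_mem {A : Matrix (Fin n) (Fin n) ℝ} {μ : ℝ} {x : EuclideanSpace ℝ (Fin n)}
    (hx : x ∈ eigSp A μ) : eigProj A μ x = x :=
  Submodule.starProjection_eq_self_iff.mpr hx

lemma eigProj_of_mem_ne {A : Matrix (Fin n) (Fin n) ℝ} (hA : A.transpose = A) {μ lam : ℝ}
    (hne : lam ≠ μ) {x : EuclideanSpace ℝ (Fin n)}
    (hx : x ∈ eigSp A μ) : eigProj A lam x = 0 := by
  have hsym : (Matrix.toEuclideanLin A).IsSymmetric := by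
    intro u v
    show inner ℝ (WithLp.toLp 2 (A.mulVec u)) v = inner ℝ u (WithLp.toLp 2 (A.mulVec v))
    rw [← aevalVec_X, ← aevalVec_X]
    exact inner_X_symm hA u v
  have hfam := hsym.orthogonalFamily_eigenspaces
  have hx' : x ∈ (eigSp A lam)ᗮ := by
    rw [Submodule.mem_orthogonal']
    intro u hu
    exact hfam hne.symm (⟨x, hx⟩ : Module.End.eigenspace (Matrix.toEuclideanLin A) μ) ⟨u, hu⟩
  unfold eigProj
  rw [Submodule.orthogonalProjectionOnto_eq_zero_iff.mpr hx']
  rfl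

lemma exists_eigProj_ne_zero {A : Matrix (Fin n) (Fin n) ℝ} (hA : A.transpose = A)
    {v : EuclideanSpace ℝ (Fin n)} (hv : ∀ μ, eigProj A μ v = 0) : v = 0 := by
  have hsym : (Matrix.toEuclideanLin A).IsSymmetric := by
    intro u w
    show inner ℝ (WithLp.toLp 2 (A.mulVec u)) w = inner ℝ u (WithLp.toLp 2 (A.mulVec w))
    rw [← aevalVec_X, ← aevalVec_X]
    exact inner_X_symm hA u w
  have hmem : v ∈ (⨆ μ, Module.End.eigenspace (Matrix.toEuclideanLin A) μ)ᗮ := by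
    rw [Submodule.mem_orthogonal]
    intro u hu
    have : ∀ μ, v ∈ (eigSp A μ)ᗮ := by
      intro μ
      have := hv μ
      unfold eigProj at this
      rw [← Submodule.orthogonalProjectionOnto_eq_zero_iff]
      exact_mod_cast this
    induction hu using Submodule.iSup_induction' with
    | mem μ x hx =>
        exact (this μ) x hx
    | zero => simp
    | add x hx y hy ihx ihy => rw [inner_add_left, ihx, ihy, add_zero]
  rw [hsym.orthogonalComplement_iSup_eigenspaces_eq_bot] at hmem
  simpa using hmem

lemma dSet_le {G : SimpleGraph (Fin n)} {S : Finset (Fin n)} {i c : Fin n} (hc : c ∈ S) :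
    dSet G S i ≤ G.dist i c :=
  Nat.sInf_le ⟨c, hc, rfl⟩

lemma exists_dSet_eq {G : SimpleGraph (Fin n)} {S : Finset (Fin n)} (hS : S.Nonempty)
    (i : Fin n) : ∃ c ∈ S, G.dist i c = dSet G S i := by
  obtain ⟨c, hc⟩ := hS
  exact Nat.sInf_mem (⟨G.dist i c, c, hc, rfl⟩ : {k | ∃ j ∈ S, G.dist i j = k}.Nonempty)

lemma exists_dSet_pred {G : SimpleGraph (Fin n)} (hconn : G.Connected)
    {S : Finset (Fin n)} (hS : S.Nonempty) {v : Fin n} {m : ℕ}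
    (h : dSet G S v = m + 1) : ∃ u, dSet G S u = m := by
  obtain ⟨c, hc, hd⟩ := exists_dSet_eq hS v
  rw [h] at hd
  have hne : G.dist v c ≠ 0 := by omega
  obtain ⟨p, hp⟩ := SimpleGraph.exists_walk_of_dist_ne_zero hne
  cases p with
  | nil => simp [SimpleGraph.dist_self] at hd
  | cons hadj q =>
      rename_i u
      refine ⟨u, le_antisymm ?_ ?_⟩
      · have h1 : G.dist u c ≤ m := by
          have := SimpleGraph.dist_le q
          simp [SimpleGraph.Walk.length_cons] at hp
          omega
        exact le_trans (dSet_le hc) h1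
      · obtain ⟨c', hc', hd'⟩ := exists_dSet_eq hS u
        have h2 : G.dist v u ≤ 1 := by
          have := SimpleGraph.dist_le (SimpleGraph.Walk.cons hadj SimpleGraph.Walk.nil)
          simpa using this
        have h3 : G.dist v c' ≤ G.dist v u + G.dist u c' := hconn.dist_triangle
        have h4 : m + 1 ≤ G.dist v c' := by rw [← h]; exact dSet_le hc'
        rw [hd'] at h3
        omega

lemma subcons_nonempty (hn : 0 < n) {G : SimpleGraph (Fin n)} (hconn : G.Connected)
    {S : Finset (Fin n)} (hS : S.Nonempty) {j : ℕ} (hj : j ≤ eccS G S) :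
    (subcons G S j).Nonempty := by
  suffices h : ∀ m, (∃ v, dSet G S v = m) → ∀ j ≤ m, ∃ v, dSet G S v = j by
    haveI : Nonempty (Fin n) := ⟨⟨0, hn⟩⟩
    obtain ⟨i0, -, h0⟩ := Finset.exists_mem_eq_sup Finset.univ Finset.univ_nonempty (dSet G S)
    obtain ⟨v, hv⟩ := h (eccS G S) ⟨i0, h0.symm⟩ j hj
    exact ⟨v, by simp [subcons, hv]⟩
  intro m
  induction m with
  | zero =>
      intro hex j hj
      have : j = 0 := by omega
      subst this; exact hex
  | succ m ih =>
      rintro ⟨v, hv⟩ j hj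
      rcases Nat.lt_or_ge j (m + 1) with h' | h'
      · exact ih (exists_dSet_pred hconn hS hv) j (by omega)
      · have : j = m + 1 := by omega
        subst this; exact ⟨v, hv⟩

lemma rho_ne_zero {ν : EuclideanSpace ℝ (Fin n)} (hν : ∀ i, 0 < ν i)
    {S : Finset (Fin n)} (hS : S.Nonempty) : rho ν S ≠ 0 := by
  obtain ⟨i, hi⟩ := hS
  intro h
  have h1 : rho ν S i = (0 : EuclideanSpace ℝ (Fin n)) i := by rw [h]
  have h2 : rho ν S i = ν i := by simp [rho, hi]
  have h3 : (0 : EuclideanSpace ℝ (Fin n)) i = 0 := rfl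
  rw [h2, h3] at h1
  exact absurd h1 (ne_of_gt (hν i))

lemma span_poly {p : ℕ → Polynomial ℝ} {d : ℕ} (hdeg : ∀ k ≤ d, (p k).natDegree = k)
    (hp0 : p 0 ≠ 0) :
    ∀ m, m ≤ d → ∀ q : Polynomial ℝ, q.natDegree ≤ m →
      q ∈ Submodule.span ℝ (Set.range fun j : Fin (m + 1) => p j) := by
  intro m
  induction m with
  | zero =>
      intro _ q hq
      have h0 : (p 0).natDegree = 0 := hdeg 0 (by omega)
      obtain ⟨a, ha⟩ : ∃ a, p 0 = Polynomial.C a :=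
        ⟨_, Polynomial.eq_C_of_natDegree_eq_zero h0⟩
      obtain ⟨b, hb⟩ : ∃ b, q = Polynomial.C b :=
        ⟨_, Polynomial.eq_C_of_natDegree_le_zero hq⟩
      have hane : a ≠ 0 := fun h => hp0 (by rw [ha, h, map_zero])
      have key : q = (b / a) • p 0 := by
        rw [ha, hb, Polynomial.smul_C, smul_eq_mul, div_mul_cancel₀ _ hane]
      rw [key]
      exact Submodule.smul_mem _ _ (Submodule.subset_span ⟨0, rfl⟩)
  | succ m ih =>
      intro hm q hq
      have hdm : (p (m + 1)).natDegree = m + 1 := hdeg _ hm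
      have hne : p (m + 1) ≠ 0 := fun h0 => by simp [h0] at hdm
      have hlc : (p (m + 1)).coeff (m + 1) ≠ 0 := by
        have := Polynomial.leadingCoeff_ne_zero.mpr hne
        rwa [Polynomial.leadingCoeff, hdm] at this
      set c := q.coeff (m + 1) / (p (m + 1)).coeff (m + 1) with hcdef
      have hq' : (q - c • p (m + 1)).natDegree ≤ m := by
        apply Polynomial.natDegree_le_iff_coeff_eq_zero.mpr
        intro i hi
        rw [Polynomial.coeff_sub, Polynomial.coeff_smul, smul_eq_mul]
        rcases eq_or_lt_of_le (Nat.succ_le_of_lt hi) with h' | h'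
        · rw [← h', hcdef, div_mul_cancel₀ _ hlc, sub_self]
        · rw [Polynomial.coeff_eq_zero_of_natDegree_lt (lt_of_le_of_lt hq h'),
            Polynomial.coeff_eq_zero_of_natDegree_lt (by omega : (p (m+1)).natDegree < i)]
          ring
      have hmem := ih (by omega) _ hq'
      have hsub : Submodule.span ℝ (Set.range fun j : Fin (m + 1) => p j) ≤
          Submodule.span ℝ (Set.range fun j : Fin (m + 2) => p j) := by
        apply Submodule.span_mono
        rintro x ⟨j, rfl⟩
        exact ⟨j.castSucc, rfl⟩
      have h2 : p (m + 1) ∈ Submodule.span ℝ (Set.range fun j : Fin (m + 2) => p j) :=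
        Submodule.subset_span ⟨Fin.last (m + 1), rfl⟩
      have h3 := Submodule.add_mem _ (hsub hmem) (Submodule.smul_mem _ c h2)
      simpa using h3


theorem consecutive_subconstituents_cover_spectrum {n : ℕ} (hn : 0 < n) (G : SimpleGraph (Fin n)) [DecidableRel G.Adj]
    (hconn : G.Connected)
    (ν : EuclideanSpace ℝ (Fin n)) (hν : ∀ i, 0 < ν i) (lam0 : ℝ)
    (hPerron : (G.adjMatrix ℝ).mulVec ν = lam0 • ν)
    (C : Finset (Fin n)) (hC : C.Nonempty)
    (d : ℕ) (hd : d + 1 = (evloc (G.adjMatrix ℝ) ν C).ncard)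
    (p : ℕ → Polynomial ℝ)
    (hdeg : ∀ k ≤ d, (p k).natDegree = k)
    (horth : ∀ k ≤ d, ∀ h ≤ d, k ≠ h →
      (inner ℝ (aevalVec (G.adjMatrix ℝ) (p k) (unitVec ν C))
             (aevalVec (G.adjMatrix ℝ) (p h) (unitVec ν C)) : ℝ) = 0)
    (hnorm : ∀ k ≤ d,
      (inner ℝ (aevalVec (G.adjMatrix ℝ) (p k) (unitVec ν C))
             (aevalVec (G.adjMatrix ℝ) (p k) (unitVec ν C)) : ℝ) = (p k).eval lam0)
    (hcode : ∀ k ≤ eccS G C, rho ν (subcons G C k) = aevalVec (G.adjMatrix ℝ) (p k) (rho ν C)) :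
    ∀ k : ℕ, k + 1 ≤ eccS G C →
      evloc (G.adjMatrix ℝ) ν C
        = evloc (G.adjMatrix ℝ) ν (subcons G C k)
            ∪ evloc (G.adjMatrix ℝ) ν (subcons G C (k + 1)) := by
  intro k hk
  set A := G.adjMatrix ℝ with hAdef
  have hA : A.transpose = A := SimpleGraph.transpose_adjMatrix G
  set E := eccS G C with hEdef
  have hρC : rho ν C ≠ 0 := rho_ne_zero hν hC
  have hρnorm : (‖rho ν C‖)⁻¹ ≠ 0 := inv_ne_zero (norm_ne_zero_iff.mpr hρC)
  set e := unitVec ν C with hedef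
  set w : ℕ → EuclideanSpace ℝ (Fin n) := fun j => aevalVec A (p j) e with hwdef
  have hwrho : ∀ j, j ≤ E → w j = (‖rho ν C‖)⁻¹ • rho ν (subcons G C j) := by
    intro j hj
    have : w j = aevalVec A (p j) ((‖rho ν C‖)⁻¹ • rho ν C) := rfl
    rw [this, aevalVec_vsmul, ← hcode j hj]
  have hwne : ∀ j, j ≤ E → w j ≠ 0 := by
    intro j hj
    rw [hwrho j hj]
    exact smul_ne_zero hρnorm (rho_ne_zero hν (subcons_nonempty hn hconn hC hj))
  have hpne : ∀ j, j ≤ E → p j ≠ 0 := by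
    intro j hj h0
    apply hwne j hj
    show aevalVec A (p j) e = 0
    rw [h0, aevalVec_zero]
  have hp0 : p 0 ≠ 0 := hpne 0 (by omega)
  -- finiteness of local spectrum
  have hfin : (evloc A ν C).Finite := by
    by_contra hinf
    rw [Set.Infinite.ncard hinf] at hd
    omega
  set F := hfin.toFinset with hFdef
  have hFcard : F.card = d + 1 := by
    rw [← Set.ncard_eq_toFinset_card _ hfin, ← hd]
  have hFmem : ∀ μ, μ ∈ F ↔ eigProj A μ (rho ν C) ≠ 0 := by
    intro μ
    rw [hFdef, Set.Finite.mem_toFinset]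
    rfl
  -- spectral decomposition of rho C
  have hsum : rho ν C = ∑ μ ∈ F, eigProj A μ (rho ν C) := by
    have hz : ∀ lam, eigProj A lam (rho ν C - ∑ μ ∈ F, eigProj A μ (rho ν C)) = 0 := by
      intro lam
      rw [eigProj_sub, eigProj_sum]
      by_cases hl : lam ∈ F
      · rw [Finset.sum_eq_single_of_mem lam hl]
        · have hmem : eigProj A lam (rho ν C) ∈ eigSp A lam :=
            ((eigSp A lam).orthogonalProjection (rho ν C)).2
          rw [eigProj_of_mem hmem, sub_self]
        · intro b _ hbne
          exact eigProj_of_mem_ne hA hbne.symm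
            (((eigSp A b).orthogonalProjection (rho ν C)).2)
      · have h1 : eigProj A lam (rho ν C) = 0 := by
          by_contra hne
          exact hl ((hFmem lam).mpr hne)
        rw [h1, Finset.sum_eq_zero, sub_zero]
        intro b hb
        have hbne : lam ≠ b := fun hh => hl (hh ▸ hb)
        exact eigProj_of_mem_ne hA hbne (((eigSp A b).orthogonalProjection (rho ν C)).2)
    have h0 := exists_eigProj_ne_zero hA hz
    exact sub_eq_zero.mp h0
  -- the span V
  set T : Finset (EuclideanSpace ℝ (Fin n)) := F.image (fun μ => eigProj A μ (rho ν C))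
    with hTdef
  set V := Submodule.span ℝ (T : Set (EuclideanSpace ℝ (Fin n))) with hVdef
  have hVrank : Module.finrank ℝ V ≤ d + 1 := by
    have h1 := finrank_span_finset_le_card (R := ℝ) T
    have h2 : T.card ≤ F.card := Finset.card_image_le
    rw [hVdef]
    calc Module.finrank ℝ (Submodule.span ℝ (T : Set (EuclideanSpace ℝ (Fin n))))
        ≤ T.card := h1
      _ ≤ F.card := h2
      _ = d + 1 := hFcard
  have hmemV : ∀ q : Polynomial ℝ, aevalVec A q (rho ν C) ∈ V := by
    intro q
    have hq : aevalVec A q (rho ν C)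
        = ∑ μ ∈ F, Polynomial.eval μ q • eigProj A μ (rho ν C) := by
      conv_lhs => rw [hsum]
      rw [aevalVec_vsum]
      apply Finset.sum_congr rfl
      intro μ _
      exact aevalVec_of_mem_eigSp (((eigSp A μ).orthogonalProjection (rho ν C)).2) q
    rw [hq]
    apply Submodule.sum_mem
    intro μ hμ
    exact Submodule.smul_mem _ _ (Submodule.subset_span (Finset.mem_image_of_mem _ hμ))
  -- eccentricity bounded by d
  have hEd : E ≤ d := by
    set g : Fin (E + 1) → EuclideanSpace ℝ (Fin n) := fun j => rho ν (subcons G C j) with hgdef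
    have hgmem : ∀ j, g j ∈ V := by
      intro j
      show rho ν (subcons G C (j : ℕ)) ∈ V
      rw [hcode j (by omega : (j : ℕ) ≤ eccS G C)]
      exact hmemV _
    have hgind : LinearIndependent ℝ g := by
      rw [Fintype.linearIndependent_iff]
      intro c hc j
      obtain ⟨i, hi⟩ := subcons_nonempty hn hconn hC (show (j : ℕ) ≤ E by omega)
      have hdi : dSet G C i = (j : ℕ) := by
        simpa [subcons] using hi
      have h1 : (inner ℝ (∑ j', c j' • g j') (EuclideanSpace.single i (1 : ℝ)) : ℝ) = 0 := by
        rw [hc, inner_zero_left]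
      rw [sum_inner] at h1
      have h2 : ∀ j' : Fin (E + 1),
          (inner ℝ (c j' • g j') (EuclideanSpace.single i (1 : ℝ)) : ℝ)
            = c j' * (if dSet G C i = (j' : ℕ) then ν i else 0) := by
        intro j'
        rw [EuclideanSpace.inner_single_right]
        have happ : (c j' • g j') i = c j' * (if dSet G C i = (j' : ℕ) then ν i else 0) := by
          have : g j' i = if dSet G C i = (j' : ℕ) then ν i else 0 := by
            show rho ν (subcons G C (j' : ℕ)) i = _
            simp [rho, subcons]
          rw [PiLp.smul_apply, this, smul_eq_mul]
        simp [happ]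
      rw [Finset.sum_congr rfl (fun j' _ => h2 j')] at h1
      rw [Finset.sum_eq_single j] at h1
      · rw [hdi] at h1
        simp at h1
        rcases h1 with h | h
        · exact h
        · exact absurd h (ne_of_gt (hν i))
      · intro b _ hb
        have : dSet G C i ≠ (b : ℕ) := by
          rw [hdi]
          intro hh
          exact hb (Fin.ext hh.symm)
        rw [if_neg this, mul_zero]
      · intro hj'
        exact absurd (Finset.mem_univ j) hj'
    have hgind' : LinearIndependent ℝ (fun j => (⟨g j, hgmem j⟩ : V)) := by
      apply LinearIndependent.of_comp V.subtype
      exact hgind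
    have hcard := hgind'.fintype_card_le_finrank
    rw [Fintype.card_fin] at hcard
    omega
  -- polynomial span
  have hspanP := span_poly hdeg hp0
  -- orthogonality in w form
  have hinner0 : ∀ i j : ℕ, i ≤ d → j ≤ d → i ≠ j → (inner ℝ (w i) (w j) : ℝ) = 0 := by
    intro i j hi hj hij
    exact horth i hi j hj hij
  -- the three-term recurrence step
  have hrec : ∀ m : ℕ, 1 ≤ m → m + 1 ≤ E → ∀ μ : ℝ,
      (p m).eval μ = 0 → (p (m + 1)).eval μ = 0 → (p (m - 1)).eval μ = 0 := by
    intro m hm1 hmE μ hpm hpm1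
    have hdm : (p m).natDegree = m := hdeg m (by omega)
    have hXdeg : (X * p m).natDegree ≤ m + 1 := by
      refine le_trans (Polynomial.natDegree_mul_le) ?_
      rw [Polynomial.natDegree_X, hdm]
      omega
    obtain ⟨c, hc⟩ := (Submodule.mem_span_range_iff_exists_fun ℝ).mp (hspanP (m + 1) (by omega) _ hXdeg)
    have hvec : aevalVec A (X * p m) e = ∑ j : Fin (m + 2), c j • w j := by
      rw [← hc, aevalVec_sum]
      apply Finset.sum_congr rfl
      intro j _
      rw [aevalVec_smul]
    have hinner : ∀ i : Fin (m + 2),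
        (inner ℝ (aevalVec A (X * p m) e) (w (i : ℕ)) : ℝ)
          = c i * inner ℝ (w (i : ℕ)) (w (i : ℕ)) := by
      intro i
      rw [hvec, sum_inner]
      rw [Finset.sum_eq_single i]
      · rw [real_inner_smul_left]
      · intro b _ hb
        rw [real_inner_smul_left,
          hinner0 (b : ℕ) (i : ℕ) (by omega) (by omega) (fun hh => hb (Fin.ext hh)), mul_zero]
      · intro hi
        exact absurd (Finset.mem_univ i) hi
    have hcross : ∀ j : ℕ,
        (inner ℝ (aevalVec A (X * p m) e) (w j) : ℝ)
          = inner ℝ (w m) (aevalVec A (X * p j) e) := by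
      intro j
      rw [aevalVec_mul, aevalVec_mul]
      exact inner_X_symm hA _ _
    -- coefficients below m-1 vanish
    have hA0 : ∀ j : Fin (m + 2), (j : ℕ) + 1 < m → c j = 0 := by
      intro j hj
      have hdj : (p (j : ℕ)).natDegree = (j : ℕ) := hdeg _ (by omega)
      have hXdegj : (X * p (j : ℕ)).natDegree ≤ (j : ℕ) + 1 := by
        refine le_trans (Polynomial.natDegree_mul_le) ?_
        rw [Polynomial.natDegree_X, hdj]
        omega
      obtain ⟨c', hc'⟩ :=
        (Submodule.mem_span_range_iff_exists_fun ℝ).mp (hspanP ((j : ℕ) + 1) (by omega) _ hXdegj)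
      have h1 : (inner ℝ (w m) (aevalVec A (X * p (j : ℕ)) e) : ℝ) = 0 := by
        rw [← hc', aevalVec_sum]
        rw [inner_sum]
        apply Finset.sum_eq_zero
        intro b _
        rw [aevalVec_smul, real_inner_smul_right,
          hinner0 m (b : ℕ) (by omega) (by omega) (by omega), mul_zero]
      have h2 := hinner j
      rw [hcross, h1] at h2
      have h3 : (inner ℝ (w (j : ℕ)) (w (j : ℕ)) : ℝ) ≠ 0 :=
        inner_self_ne_zero.mpr (hwne (j : ℕ) (by omega))
      rcases mul_eq_zero.mp h2.symm with h | h
      · exact h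
      · exact absurd h h3
    -- the coefficient at m-1 does not vanish
    have hCm : c ⟨m - 1, by omega⟩ ≠ 0 := by
      have hdm1 : (p (m - 1)).natDegree = m - 1 := hdeg _ (by omega)
      have hXdegm1 : (X * p (m - 1)).natDegree ≤ (m - 1) + 1 := by
        refine le_trans (Polynomial.natDegree_mul_le) ?_
        rw [Polynomial.natDegree_X, hdm1]
        omega
      obtain ⟨c', hc'⟩ :=
        (Submodule.mem_span_range_iff_exists_fun ℝ).mp (hspanP ((m - 1) + 1) (by omega) _ hXdegm1)
      have hlcm : (p m).coeff m ≠ 0 := by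
        have := Polynomial.leadingCoeff_ne_zero.mpr (hpne m (by omega))
        rwa [Polynomial.leadingCoeff, hdm] at this
      have hlcm1 : (p (m - 1)).coeff (m - 1) ≠ 0 := by
        have := Polynomial.leadingCoeff_ne_zero.mpr (hpne (m - 1) (by omega))
        rwa [Polynomial.leadingCoeff, hdm1] at this
      have hcoeff : c' ⟨m, by omega⟩ * (p m).coeff m = (p (m - 1)).coeff (m - 1) := by
        have hcg := congrArg (fun q => Polynomial.coeff q m) hc'
        simp only [Polynomial.finset_sum_coeff, Polynomial.coeff_smul, smul_eq_mul] at hcg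
        rw [Finset.sum_eq_single (⟨m, by omega⟩ : Fin (m - 1 + 2))] at hcg
        · rw [hcg]
          have hm' : m - 1 + 1 = m := by omega
          conv_lhs => rw [← hm']
          rw [Polynomial.coeff_X_mul, Nat.add_sub_cancel]
        · intro b _ hb
          have hbv : (b : ℕ) < m := by
            have := b.isLt
            have hne : (b : ℕ) ≠ m := fun hh => hb (Fin.ext hh)
            omega
          have hdb : (p (b : ℕ)).natDegree = (b : ℕ) := hdeg _ (by omega)
          rw [Polynomial.coeff_eq_zero_of_natDegree_lt (by omega), mul_zero]
        · intro hm'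
          exact absurd (Finset.mem_univ _) hm'
      have hc'm : c' ⟨m, by omega⟩ ≠ 0 := by
        intro h0
        rw [h0, zero_mul] at hcoeff
        exact hlcm1 hcoeff.symm
      have h1 : (inner ℝ (w m) (aevalVec A (X * p (m - 1)) e) : ℝ)
          = c' ⟨m, by omega⟩ * inner ℝ (w m) (w m) := by
        rw [← hc', aevalVec_sum, inner_sum]
        rw [Finset.sum_eq_single (⟨m, by omega⟩ : Fin (m - 1 + 2))]
        · rw [aevalVec_smul, real_inner_smul_right]
        · intro b _ hb
          have hbv : (b : ℕ) < m := by
            have := b.isLt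
            have hne : (b : ℕ) ≠ m := fun hh => hb (Fin.ext hh)
            omega
          rw [aevalVec_smul, real_inner_smul_right,
            hinner0 m (b : ℕ) (by omega) (by omega) (by omega), mul_zero]
        · intro hm'
          exact absurd (Finset.mem_univ _) hm'
      have h2 := hinner ⟨m - 1, by omega⟩
      rw [hcross] at h2
      rw [h1] at h2
      intro h0
      rw [h0, zero_mul] at h2
      have h3 : (inner ℝ (w m) (w m) : ℝ) ≠ 0 :=
        inner_self_ne_zero.mpr (hwne m (by omega))
      exact (mul_ne_zero hc'm h3) h2
    -- evaluate the recurrence at μ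
    have heval : ∑ j : Fin (m + 2), c j * (p (j : ℕ)).eval μ = μ * (p m).eval μ := by
      have := congrArg (Polynomial.eval μ) hc
      simpa [Polynomial.eval_finset_sum, Polynomial.eval_smul, smul_eq_mul] using this
    rw [hpm, mul_zero] at heval
    rw [Finset.sum_eq_single (⟨m - 1, by omega⟩ : Fin (m + 2))] at heval
    · rcases mul_eq_zero.mp heval with h | h
      · exact absurd h hCm
      · exact h
    · intro b _ hb
      have hbv : (b : ℕ) < m - 1 ∨ (b : ℕ) = m ∨ (b : ℕ) = m + 1 := by
        have := b.isLt
        have hne : (b : ℕ) ≠ m - 1 := fun hh => hb (Fin.ext hh)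
        omega
      rcases hbv with h | h | h
      · rw [hA0 b (by omega), zero_mul]
      · rw [h, hpm, mul_zero]
      · rw [h, hpm1, mul_zero]
    · intro hm'
      exact absurd (Finset.mem_univ _) hm'
  -- no common zeros of consecutive polynomials
  have hp0ne : ∀ μ : ℝ, (p 0).eval μ ≠ 0 := by
    intro μ
    have h0 : (p 0).natDegree = 0 := hdeg 0 (by omega)
    obtain ⟨a, ha⟩ : ∃ a, p 0 = Polynomial.C a := ⟨_, Polynomial.eq_C_of_natDegree_eq_zero h0⟩
    have hane : a ≠ 0 := fun hh => hp0 (by rw [ha, hh, map_zero])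
    rw [ha, Polynomial.eval_C]
    exact hane
  have hkey : ∀ μ : ℝ, ∀ m : ℕ, m + 1 ≤ E →
      ¬((p m).eval μ = 0 ∧ (p (m + 1)).eval μ = 0) := by
    intro μ m
    induction m with
    | zero =>
        rintro _ ⟨h1, -⟩
        exact hp0ne μ h1
    | succ m ih =>
        rintro hm ⟨h1, h2⟩
        have h3 := hrec (m + 1) (by omega) hm μ h1 h2
        simp only [Nat.add_sub_cancel] at h3
        exact ih (by omega) ⟨h3, h1⟩
  -- conclusion
  ext μ
  simp only [Set.mem_union]
  have hproj : ∀ j, j ≤ E →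
      eigProj A μ (rho ν (subcons G C j)) = (p j).eval μ • eigProj A μ (rho ν C) := by
    intro j hj
    rw [hcode j hj, eigProj_aevalVec hA]
  constructor
  · intro hμ
    have hμ' : eigProj A μ (rho ν C) ≠ 0 := hμ
    rcases not_and_or.mp (hkey μ k hk) with h | h
    · left
      show eigProj A μ (rho ν (subcons G C k)) ≠ 0
      rw [hproj k (by omega)]
      exact smul_ne_zero h hμ'
    · right
      show eigProj A μ (rho ν (subcons G C (k + 1))) ≠ 0
      rw [hproj (k + 1) (by omega)]
      exact smul_ne_zero h hμ'
  · intro hμ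
    show eigProj A μ (rho ν C) ≠ 0
    intro h0
    rcases hμ with h | h
    · apply h
      show eigProj A μ (rho ν (subcons G C k)) = 0
      rw [hproj k (by omega), h0, smul_zero]
    · apply h
      show eigProj A μ (rho ν (subcons G C (k + 1))) = 0
      rw [hproj (k + 1) (by omega), h0, smul_zero]
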